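/- For every n > 1 there exists a continuous, strictly increasing function 𝔣 : ℝ≥0 → ℝ≥0 such that the n-fold composition 𝔣^n(x) = exp(x) for all x ≥ 0. -/

import Mathlib

open Function

/-- Exponential on `ℝ≥0`. -/
noncomputable def stmt13E : NNReal → NNReal := fun x => Real.toNNReal (Real.exp x)

lemma stmt13E_coe (x : NNReal) : ((stmt13E x : NNReal) : ℝ) = Real.exp x :=
  Real.coe_toNNReal _ (Real.exp_pos _).le

lemma stmt13E_strictMono : StrictMono stmt13E := fun x y h => by
  rw [← NNReal.coe_lt_coe, stmt13E_coe, stmt13E_coe]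
  exact Real.exp_lt_exp.mpr h

lemma stmt13E_continuous : Continuous stmt13E :=
  continuous_real_toNNReal.comp (Real.continuous_exp.comp NNReal.continuous_coe)

lemma stmt13E_zero : stmt13E 0 = 1 := by
  simp [stmt13E]

/-- the "Abel conjugacy" inverse: `G` on `[k, k+1]` is `E^[k]` of the fractional part. -/
noncomputable def stmt13G : NNReal → NNReal := fun y => stmt13E^[⌊y⌋₊] (y - (⌊y⌋₊ : NNReal))

lemma stmt13a_mono : Monotone (fun k => stmt13E^[k] 0) := by
  apply monotone_nat_of_le_succ
  intro k
  rw [Function.iterate_succ_apply]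
  exact (stmt13E_strictMono.iterate k).monotone (by simp [stmt13E_zero])

lemma stmt13a_le (k : ℕ) : (k : NNReal) ≤ stmt13E^[k] 0 := by
  induction k with
  | zero => simp
  | succ k ih =>
    rw [Function.iterate_succ_apply']
    have h1 : ((k : NNReal) + 1 : ℝ) ≤ Real.exp (stmt13E^[k] 0) := by
      calc ((k : NNReal) + 1 : ℝ) ≤ ((stmt13E^[k] 0 : NNReal) : ℝ) + 1 := by
            have : ((k : NNReal) : ℝ) ≤ _ := NNReal.coe_le_coe.mpr ih
            linarith
        _ ≤ Real.exp _ := by linarith [Real.add_one_le_exp ((stmt13E^[k] 0 : NNReal) : ℝ)]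
    have : ((k + 1 : ℕ) : NNReal) ≤ stmt13E (stmt13E^[k] 0) := by
      rw [← NNReal.coe_le_coe, stmt13E_coe]
      push_cast
      exact h1
    exact this

lemma stmt13G_strictMono : StrictMono stmt13G := by
  intro y z hyz
  set k := ⌊y⌋₊ with hk
  set l := ⌊z⌋₊ with hl
  have hkl : k ≤ l := Nat.floor_mono hyz.le
  rcases eq_or_lt_of_le hkl with h | h
  · -- same block
    unfold stmt13G
    rw [← hk, ← hl, ← h]
    apply stmt13E_strictMono.iterate k
    have hky : (k : NNReal) ≤ y := Nat.floor_le zero_le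
    exact tsub_lt_tsub_right_of_le hky hyz
  · -- different blocks
    unfold stmt13G
    rw [← hk, ← hl]
    have h1 : stmt13E^[k] (y - (k : NNReal)) < stmt13E^[k] 1 := by
      apply stmt13E_strictMono.iterate k
      have : y < (k : NNReal) + 1 := by exact_mod_cast Nat.lt_floor_add_one y
      exact tsub_lt_iff_left (Nat.floor_le zero_le) |>.mpr this
    have h2 : stmt13E^[k] 1 = stmt13E^[k+1] 0 := by
      rw [Function.iterate_succ_apply, stmt13E_zero]
    have h3 : stmt13E^[k+1] 0 ≤ stmt13E^[l] 0 := stmt13a_mono h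
    have h4 : stmt13E^[l] 0 ≤ stmt13E^[l] (z - (l : NNReal)) :=
      (stmt13E_strictMono.iterate l).monotone zero_le
    calc stmt13E^[k] (y - (k:NNReal)) < stmt13E^[k] 1 := h1
      _ = stmt13E^[k+1] 0 := h2
      _ ≤ stmt13E^[l] 0 := h3
      _ ≤ _ := h4

lemma stmt13G_surjective : Function.Surjective stmt13G := by
  intro z
  -- find k with a k ≤ z < a (k+1)
  have hex : ∃ m, z < stmt13E^[m] 0 := by
    refine ⟨⌊z⌋₊ + 1, lt_of_lt_of_le ?_ (stmt13a_le _)⟩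
    exact_mod_cast Nat.lt_floor_add_one z
  classical
  have hm : z < stmt13E^[Nat.find hex] 0 := Nat.find_spec hex
  have hm0 : Nat.find hex ≠ 0 := by
    intro h0
    rw [h0] at hm
    simp at hm
  obtain ⟨k, hk⟩ := Nat.exists_eq_succ_of_ne_zero hm0
  rw [hk] at hm
  have hkz : stmt13E^[k] 0 ≤ z := by
    by_contra hc
    push_neg at hc
    exact Nat.find_min hex (by rw [hk]; exact Nat.lt_succ_self k) hc
  -- IVT
  have hcont : ContinuousOn (stmt13E^[k]) (Set.Icc 0 1) :=
    ((stmt13E_continuous).iterate k).continuousOn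
  have hsub : Set.Icc (stmt13E^[k] 0) (stmt13E^[k] 1) ⊆ stmt13E^[k] '' Set.Icc 0 1 :=
    intermediate_value_Icc zero_le hcont
  have hz : z ∈ Set.Icc (stmt13E^[k] 0) (stmt13E^[k] 1) := by
    constructor
    · exact hkz
    · rw [show stmt13E^[k] 1 = stmt13E^[k+1] 0 by rw [Function.iterate_succ_apply, stmt13E_zero]]
      exact hm.le
  obtain ⟨t, ht, htz⟩ := hsub hz
  have ht1 : t < 1 := by
    rcases lt_or_eq_of_le ht.2 with h | h
    · exact h
    · exfalso
      rw [h] at htz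
      rw [show stmt13E^[k] 1 = stmt13E^[k+1] 0 by rw [Function.iterate_succ_apply, stmt13E_zero]] at htz
      exact absurd htz.symm (ne_of_lt hm)
  refine ⟨t + (k : NNReal), ?_⟩
  have hfloor : ⌊t + (k : NNReal)⌋₊ = k := by
    rw [Nat.floor_add_natCast zero_le, Nat.floor_eq_zero.mpr ht1, zero_add]
  unfold stmt13G
  rw [hfloor, add_tsub_cancel_right]
  exact htz

lemma stmt13G_succ (y : NNReal) : stmt13G (y + 1) = stmt13E (stmt13G y) := by
  unfold stmt13G
  have h1 : ⌊y + 1⌋₊ = ⌊y⌋₊ + 1 := by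
    rw [show (1 : NNReal) = ((1:ℕ) : NNReal) by norm_num, Nat.floor_add_natCast zero_le]
  rw [h1]
  have h2 : y + 1 - ((⌊y⌋₊ + 1 : ℕ) : NNReal) = y - (⌊y⌋₊ : NNReal) := by
    push_cast
    exact add_tsub_add_eq_tsub_right y 1 _
  rw [h2, Function.iterate_succ_apply']

theorem stmt_13 (n : ℕ) (hn : 1 < n) :
    ∃ f : NNReal → NNReal, Continuous f ∧ StrictMono f ∧
      ∀ x : NNReal, ((f^[n] x : NNReal) : ℝ) = Real.exp (x : ℝ) := by
  have hn0 : (n : NNReal) ≠ 0 := Nat.cast_ne_zero.mpr (by omega)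
  set e := StrictMono.orderIsoOfSurjective stmt13G stmt13G_strictMono stmt13G_surjective with he
  have hecoe : ∀ y, e y = stmt13G y := fun y => rfl
  set δ : NNReal := (n : NNReal)⁻¹ with hδ
  refine ⟨fun x => e (e.symm x + δ), ?_, ?_, ?_⟩
  · exact e.continuous.comp ((continuous_add_right δ).comp e.symm.continuous)
  · intro x y hxy
    exact e.strictMono (by exact add_lt_add_left (e.symm.strictMono hxy) δ)
  · intro x
    have key : ∀ m x, (fun x => e (e.symm x + δ))^[m] x = e (e.symm x + (m : NNReal) * δ) := by
      intro m
      induction m with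
      | zero => intro x; simp
      | succ m ih =>
        intro x
        rw [Function.iterate_succ_apply', ih]
        simp only [OrderIso.symm_apply_apply]
        congr 1
        push_cast
        ring
    rw [key n x]
    have : (n : NNReal) * δ = 1 := mul_inv_cancel₀ hn0
    rw [this]
    have : e (e.symm x + 1) = stmt13E x := by
      rw [hecoe, stmt13G_succ]
      congr 1
      exact (hecoe _).symm.trans (congrArg _ rfl) |>.trans (e.apply_symm_apply x)
    rw [this, stmt13E_coe]
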